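/- Define operators on Λ: e_n (multiplication by the elementary symmetric function) and e*_n = e_n^⊥ (the adjoint skewing operator). Then for all m, n ≥ 1: e*_m ∘ e_n − e_n ∘ e*_m = e*_{m−1} ∘ e_{n−1}. -/

import Mathlib

open MvPolynomial PowerSeries

/-- A model of the ring `Λ` of symmetric functions over `ℚ`: the polynomial ring
`ℚ[p₁, p₂, …]` on the power sums, where the variable `X n` represents `p_{n+1}`. -/
abbrev Lam : Type := MvPolynomial ℕ ℚ

/-- The power sum `p_n ∈ Λ` (for `n ≥ 1`). -/
noncomputable def pVar (n : ℕ) : Lam := MvPolynomial.X (n - 1)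

/-- The exponential of a formal power series with vanishing constant term. -/
noncomputable def psExp (F : PowerSeries Lam) : PowerSeries Lam :=
  PowerSeries.mk fun N =>
    ∑ k ∈ Finset.range (N + 1), (k.factorial : ℚ)⁻¹ • PowerSeries.coeff N (F ^ k)

/-- The complete homogeneous symmetric function `h_n ∈ Λ`, defined via the generating
function `∑_{n≥0} h_n z^n = exp (∑_{n≥1} p_n z^n / n)`; in particular `h_0 = 1`. -/
noncomputable def hPoly (n : ℕ) : Lam :=
  PowerSeries.coeff n
    (psExp (PowerSeries.mk fun k => if k = 0 then 0 else (k : ℚ)⁻¹ • pVar k))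

/-- The quantity `z_λ = ∏ᵢ i^{mᵢ(λ)} mᵢ(λ)!` attached to the monomial `p_λ = ∏ p_i^{mᵢ}`. -/
noncomputable def zWeight (d : ℕ →₀ ℕ) : ℚ :=
  d.prod fun n k => ((n : ℚ) + 1) ^ k * (k.factorial : ℚ)

/-- The Hall inner product on `Λ`, for which `⟨p_λ, p_μ⟩ = z_λ δ_{λμ}` (equivalently, the
Schur functions form an orthonormal basis). -/
noncomputable def hallForm (f g : Lam) : ℚ :=
  ∑ d ∈ f.support, MvPolynomial.coeff d f * MvPolynomial.coeff d g * zWeight d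


/-- The elementary symmetric function `e_n ∈ Λ`, defined via the generating function
`∑_{n≥0} e_n z^n = exp (∑_{n≥1} (-1)^{n-1} p_n z^n / n)`; in particular `e_0 = 1`. -/
noncomputable def ePoly (n : ℕ) : Lam :=
  PowerSeries.coeff n
    (psExp (PowerSeries.mk fun k =>
      if k = 0 then 0 else ((-1 : ℚ) ^ (k - 1) * (k : ℚ)⁻¹) • pVar k))

/-- Multiplication by `e_n` as a linear operator on `Λ`. -/
noncomputable def eMul (n : ℕ) : Module.End ℚ Lam := LinearMap.mulLeft ℚ (ePoly n)

/-! ### Auxiliary machinery -/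

section Aux

lemma zWeight_ne_zero (d : ℕ →₀ ℕ) : zWeight d ≠ 0 := by
  unfold zWeight Finsupp.prod
  rw [Finset.prod_ne_zero_iff]
  intro i _
  positivity

lemma zWeight_add_single (d : ℕ →₀ ℕ) (i : ℕ) :
    zWeight (d + Finsupp.single i 1) = ((i : ℚ) + 1) * ((d i : ℚ) + 1) * zWeight d := by
  classical
  have hg : ∀ j : ℕ, ((j : ℚ) + 1) ^ (0:ℕ) * ((Nat.factorial 0 : ℚ)) = 1 := by simp
  unfold zWeight
  rw [← Finsupp.mul_prod_erase' (d + Finsupp.single i 1) i _ hg,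
      ← Finsupp.mul_prod_erase' d i _ hg]
  have h1 : (d + Finsupp.single i 1).erase i = d.erase i := by
    rw [Finsupp.erase_add, Finsupp.erase_single, add_zero]
  have h2 : ((d + Finsupp.single i 1) : ℕ →₀ ℕ) i = d i + 1 := by
    rw [Finsupp.add_apply, Finsupp.single_apply, if_pos rfl]
  rw [h1, h2]
  rw [pow_succ, Nat.factorial_succ]
  push_cast
  ring

lemma hallForm_monomial_left (d : ℕ →₀ ℕ) (a : ℚ) (g : Lam) :
    hallForm (monomial d a) g = a * MvPolynomial.coeff d g * zWeight d := by
  classical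
  unfold hallForm
  rcases eq_or_ne a 0 with rfl | ha
  · simp
  · rw [support_monomial, if_neg ha, Finset.sum_singleton, MvPolynomial.coeff_monomial,
      if_pos rfl]

lemma hallForm_eq_sum_of_subset (f g : Lam) {s : Finset (ℕ →₀ ℕ)} (hs : f.support ⊆ s) :
    hallForm f g = ∑ d ∈ s, MvPolynomial.coeff d f * MvPolynomial.coeff d g * zWeight d := by
  unfold hallForm
  exact Finset.sum_subset hs (by
    intro d _ hd
    rw [MvPolynomial.notMem_support_iff] at hd
    rw [hd, zero_mul, zero_mul])

lemma hallForm_comm (f g : Lam) : hallForm f g = hallForm g f := by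
  rw [hallForm_eq_sum_of_subset f g (Finset.subset_union_left (s₂ := g.support)),
      hallForm_eq_sum_of_subset g f (Finset.subset_union_right (s₁ := f.support))]
  rw [Finset.union_comm]
  exact Finset.sum_congr rfl fun d _ => by ring

lemma hallForm_add_left (f₁ f₂ g : Lam) :
    hallForm (f₁ + f₂) g = hallForm f₁ g + hallForm f₂ g := by
  classical
  rw [hallForm_eq_sum_of_subset (f₁ + f₂) g
        ((MvPolynomial.support_add (p := f₁) (q := f₂)).trans (le_refl _)),
      hallForm_eq_sum_of_subset f₁ g (Finset.subset_union_left (s₂ := f₂.support)),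
      hallForm_eq_sum_of_subset f₂ g (Finset.subset_union_right (s₁ := f₁.support)),
      ← Finset.sum_add_distrib]
  exact Finset.sum_congr rfl fun d _ => by rw [coeff_add]; ring

lemma hallForm_add_right (f g₁ g₂ : Lam) :
    hallForm f (g₁ + g₂) = hallForm f g₁ + hallForm f g₂ := by
  rw [hallForm_comm, hallForm_add_left, hallForm_comm g₁, hallForm_comm g₂]

lemma hallForm_smul_left (c : ℚ) (f g : Lam) : hallForm (c • f) g = c * hallForm f g := by
  rw [hallForm_eq_sum_of_subset (c • f) g (MvPolynomial.support_smul (a := c) (f := f)),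
      hallForm, Finset.mul_sum]
  exact Finset.sum_congr rfl fun d _ => by
    rw [MvPolynomial.coeff_smul]; simp; ring

lemma hallForm_smul_right (c : ℚ) (f g : Lam) : hallForm f (c • g) = c * hallForm f g := by
  rw [hallForm_comm, hallForm_smul_left, hallForm_comm]

lemma hallForm_monomial_right (f : Lam) (d : ℕ →₀ ℕ) :
    hallForm f (monomial d 1) = MvPolynomial.coeff d f * zWeight d := by
  rw [hallForm_comm, hallForm_monomial_left, one_mul]

lemma hallForm_ext {a b : Lam} (h : ∀ g, hallForm a g = hallForm b g) : a = b := by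
  ext d
  have := h (monomial d 1)
  rw [hallForm_monomial_right, hallForm_monomial_right] at this
  exact mul_right_cancel₀ (zWeight_ne_zero d) this

lemma hallForm_sub_left (f₁ f₂ g : Lam) :
    hallForm (f₁ - f₂) g = hallForm f₁ g - hallForm f₂ g := by
  have := hallForm_add_left f₂ (f₁ - f₂) g
  rw [add_sub_cancel] at this
  linarith

end Aux

section PS

noncomputable def coeffwise (dd : ℕ → Lam →ₗ[ℚ] Lam) :
    PowerSeries Lam →ₗ[ℚ] PowerSeries Lam where
  toFun G := PowerSeries.mk fun N => dd N (PowerSeries.coeff N G)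
  map_add' G H := by ext N; simp
  map_smul' c G := by ext N; simp

lemma coeff_coeffwise (dd : ℕ → Lam →ₗ[ℚ] Lam) (N : ℕ) (G : PowerSeries Lam) :
    PowerSeries.coeff N (coeffwise dd G) = dd N (PowerSeries.coeff N G) := by
  show PowerSeries.coeff N (PowerSeries.mk fun M => dd M (PowerSeries.coeff M G)) = _
  exact PowerSeries.coeff_mk _ _

lemma D_one (D : PowerSeries Lam →ₗ[ℚ] PowerSeries Lam)
    (hmul : ∀ G H, D (G * H) = D G * H + G * D H) : D 1 = 0 := by
  have h := hmul 1 1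
  rw [one_mul (D 1), mul_one, mul_one] at h
  exact left_eq_add.mp h

lemma D_pow (D : PowerSeries Lam →ₗ[ℚ] PowerSeries Lam)
    (hmul : ∀ G H, D (G * H) = D G * H + G * D H) (G : PowerSeries Lam) :
    ∀ k : ℕ, D (G ^ (k + 1)) = (k + 1 : ℕ) • (G ^ k * D G) := by
  intro k
  induction k with
  | zero => simp [hmul]
  | succ k ih =>
    rw [pow_succ, hmul, ih, pow_succ, smul_mul_assoc, succ_nsmul, mul_right_comm (G ^ k) (D G) G]
    rw [succ_nsmul, succ_nsmul]

lemma coeff_pow_eq_zero {G : PowerSeries Lam} (h : PowerSeries.constantCoeff G = 0) :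
    ∀ (k N : ℕ), N < k → PowerSeries.coeff N (G ^ k) = 0 := by
  intro k
  induction k with
  | zero => intro N hN; omega
  | succ k ih =>
    intro N hN
    rw [pow_succ, mul_comm, PowerSeries.coeff_mul]
    apply Finset.sum_eq_zero
    rintro ⟨a, b⟩ hab
    rw [Finset.HasAntidiagonal.mem_antidiagonal] at hab
    rcases Nat.eq_zero_or_pos a with rfl | ha
    · rw [PowerSeries.coeff_zero_eq_constantCoeff, h, zero_mul]
    · rw [ih b (by omega), mul_zero]

lemma deriv_psExp (F : PowerSeries Lam) (hF : PowerSeries.constantCoeff F = 0)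
    (dd : ℕ → Lam →ₗ[ℚ] Lam)
    (hmul : ∀ G H, coeffwise dd (G * H) = coeffwise dd G * H + G * coeffwise dd H)
    (hD0 : PowerSeries.constantCoeff (coeffwise dd F) = 0) :
    coeffwise dd (psExp F) = psExp F * coeffwise dd F := by
  set D := coeffwise dd with hD
  ext N
  rw [coeff_coeffwise]
  have hexp : PowerSeries.coeff N (psExp F)
      = ∑ k ∈ Finset.range (N + 1), (k.factorial : ℚ)⁻¹ • PowerSeries.coeff N (F ^ k) :=
    PowerSeries.coeff_mk _ _
  rw [hexp, map_sum]
  have lhs_eq : ∑ k ∈ Finset.range (N + 1),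
      dd N ((k.factorial : ℚ)⁻¹ • PowerSeries.coeff N (F ^ k))
      = ∑ k ∈ Finset.range N, (k.factorial : ℚ)⁻¹ •
          PowerSeries.coeff N (F ^ k * D F) := by
    rw [Finset.sum_range_succ']
    have h0 : dd N ((Nat.factorial 0 : ℚ)⁻¹ • PowerSeries.coeff N (F ^ 0)) = 0 := by
      have h1 : D (1 : PowerSeries Lam) = 0 := D_one D hmul
      have h2 : dd N (PowerSeries.coeff N (1 : PowerSeries Lam)) = 0 := by
        rw [← coeff_coeffwise dd N 1, ← hD, h1, map_zero]
      simpa using h2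
    rw [h0, add_zero]
    apply Finset.sum_congr rfl
    intro k _
    rw [map_smul, ← coeff_coeffwise dd N (F ^ (k + 1)), ← hD, D_pow D hmul F k, map_nsmul,
        ← Nat.cast_smul_eq_nsmul ℚ (k + 1) (PowerSeries.coeff N (F ^ k * D F)), smul_smul]
    congr 1
    have hk1 : ((k : ℚ) + 1) ≠ 0 := by positivity
    have hkf : (k.factorial : ℚ) ≠ 0 := Nat.cast_ne_zero.mpr k.factorial_ne_zero
    rw [Nat.factorial_succ]
    push_cast
    field_simp
  rw [lhs_eq]
  have rhs_eq : PowerSeries.coeff N (psExp F * D F)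
      = ∑ k ∈ Finset.range (N + 1),
          (k.factorial : ℚ)⁻¹ • PowerSeries.coeff N (F ^ k * D F) := by
    rw [PowerSeries.coeff_mul]
    have step : ∀ p ∈ Finset.HasAntidiagonal.antidiagonal N,
        PowerSeries.coeff p.1 (psExp F) * PowerSeries.coeff p.2 (D F)
        = ∑ k ∈ Finset.range (N + 1), (k.factorial : ℚ)⁻¹ •
            (PowerSeries.coeff p.1 (F ^ k) * PowerSeries.coeff p.2 (D F)) := by
      rintro ⟨a, b⟩ hab
      rw [Finset.HasAntidiagonal.mem_antidiagonal] at hab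
      have ha : PowerSeries.coeff a (psExp F)
          = ∑ k ∈ Finset.range (N + 1), (k.factorial : ℚ)⁻¹ •
              PowerSeries.coeff a (F ^ k) := by
        rw [show PowerSeries.coeff a (psExp F) = _ from PowerSeries.coeff_mk _ _]
        apply Finset.sum_subset
        · intro x hx
          rw [Finset.mem_range] at *
          omega
        · intro x _ hx
          rw [Finset.mem_range, not_lt] at hx
          rw [coeff_pow_eq_zero hF x a (by omega), smul_zero]
      rw [ha, Finset.sum_mul]
      apply Finset.sum_congr rfl
      intro k _
      rw [smul_mul_assoc]
    rw [Finset.sum_congr rfl step, Finset.sum_comm]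
    apply Finset.sum_congr rfl
    intro k _
    rw [← Finset.smul_sum, PowerSeries.coeff_mul]
  rw [rhs_eq, Finset.sum_range_succ]
  have hlast : PowerSeries.coeff N (F ^ N * D F) = 0 := by
    rw [PowerSeries.coeff_mul]
    apply Finset.sum_eq_zero
    rintro ⟨a, b⟩ hab
    rw [Finset.HasAntidiagonal.mem_antidiagonal] at hab
    rcases lt_or_ge a N with ha | ha
    · rw [coeff_pow_eq_zero hF N a ha, zero_mul]
    · have hb : b = 0 := by omega
      subst hb
      rw [PowerSeries.coeff_zero_eq_constantCoeff, hD0, mul_zero]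
  rw [hlast, smul_zero, add_zero]

end PS

section EGen

noncomputable def Fgen : PowerSeries Lam :=
  PowerSeries.mk fun k => if k = 0 then 0 else ((-1 : ℚ) ^ (k - 1) * (k : ℚ)⁻¹) • pVar k

lemma ePoly_eq (n : ℕ) : ePoly n = PowerSeries.coeff n (psExp Fgen) := rfl

lemma constantCoeff_Fgen : PowerSeries.constantCoeff Fgen = 0 := by
  rw [Fgen, PowerSeries.constantCoeff_mk, if_pos rfl]

lemma ePoly_zero : ePoly 0 = 1 := by
  rw [ePoly_eq, psExp, PowerSeries.coeff_mk, Finset.sum_range_one]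
  simp

noncomputable def pdd (i : ℕ) : ℕ → Lam →ₗ[ℚ] Lam :=
  fun _ => (pderiv i : Derivation ℚ Lam Lam).toLinearMap

lemma pdd_apply (i N : ℕ) (f : Lam) : pdd i N f = pderiv i f := rfl

lemma pdd_hmul (i : ℕ) (G H : PowerSeries Lam) :
    coeffwise (pdd i) (G * H) = coeffwise (pdd i) G * H + G * coeffwise (pdd i) H := by
  apply PowerSeries.ext
  intro N
  rw [map_add, coeff_coeffwise, PowerSeries.coeff_mul, PowerSeries.coeff_mul,
      PowerSeries.coeff_mul, map_sum, ← Finset.sum_add_distrib]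
  apply Finset.sum_congr rfl
  rintro ⟨a, b⟩ _
  rw [coeff_coeffwise, coeff_coeffwise, pdd_apply, pdd_apply, pdd_apply, pderiv_mul]

lemma pdd_Fgen (i : ℕ) :
    coeffwise (pdd i) Fgen
      = ((-1 : ℚ) ^ i * ((i : ℚ) + 1)⁻¹) • (PowerSeries.X : PowerSeries Lam) ^ (i + 1) := by
  apply PowerSeries.ext
  intro N
  rw [coeff_coeffwise, PowerSeries.coeff_smul, PowerSeries.coeff_X_pow]
  have hF : PowerSeries.coeff N Fgen
      = if N = 0 then 0 else ((-1 : ℚ) ^ (N - 1) * (N : ℚ)⁻¹) • pVar N :=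
    PowerSeries.coeff_mk _ _
  rw [hF]
  rcases eq_or_ne N 0 with rfl | hN
  · rw [if_pos rfl, if_neg (by omega), map_zero, smul_zero]
  · rw [if_neg hN, pdd_apply, Derivation.map_smul]
    unfold pVar
    rcases eq_or_ne N (i + 1) with rfl | hNi
    · rw [if_pos rfl, Nat.add_sub_cancel, pderiv_X_self]
      congr 1
      push_cast
      ring
    · rw [if_neg hNi, pderiv_X_of_ne (by omega), smul_zero, smul_zero]

lemma pderiv_ePoly (i n : ℕ) :
    pderiv i (ePoly n)
      = if i + 1 ≤ n then ((-1 : ℚ) ^ i * ((i : ℚ) + 1)⁻¹) • ePoly (n - (i + 1)) else 0 := by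
  have hD0 : PowerSeries.constantCoeff (coeffwise (pdd i) Fgen) = 0 := by
    rw [pdd_Fgen, ← PowerSeries.coeff_zero_eq_constantCoeff, PowerSeries.coeff_smul,
        PowerSeries.coeff_X_pow, if_neg (by omega), smul_zero]
  have h := deriv_psExp Fgen constantCoeff_Fgen (pdd i) (pdd_hmul i) hD0
  have h2 := congrArg (PowerSeries.coeff n) h
  rw [coeff_coeffwise, pdd_apply, pdd_Fgen, mul_smul_comm, PowerSeries.coeff_smul,
      PowerSeries.coeff_mul_X_pow'] at h2
  rw [← ePoly_eq] at h2
  rw [h2]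
  split_ifs with hin
  · rw [← ePoly_eq]
  · rw [smul_zero]

noncomputable def Dop (i : ℕ) : Module.End ℚ Lam :=
  ((i : ℚ) + 1) • (pderiv i : Derivation ℚ Lam Lam).toLinearMap

lemma Dop_apply (i : ℕ) (f : Lam) : Dop i f = ((i : ℚ) + 1) • pderiv i f := rfl

lemma Dop_ePoly (i n : ℕ) :
    Dop i (ePoly n) = if i + 1 ≤ n then ((-1 : ℚ) ^ i) • ePoly (n - (i + 1)) else 0 := by
  rw [Dop_apply, pderiv_ePoly]
  split_ifs with h
  · rw [smul_smul]
    congr 1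
    have hi : ((i : ℚ) + 1) ≠ 0 := by positivity
    field_simp
  · rw [smul_zero]

noncomputable def zdd : ℕ → Lam →ₗ[ℚ] Lam := fun N => (N : ℚ) • LinearMap.id

lemma zdd_apply (N : ℕ) (f : Lam) : zdd N f = (N : ℚ) • f := rfl

lemma zdd_hmul (G H : PowerSeries Lam) :
    coeffwise zdd (G * H) = coeffwise zdd G * H + G * coeffwise zdd H := by
  apply PowerSeries.ext
  intro N
  rw [map_add, coeff_coeffwise, PowerSeries.coeff_mul, PowerSeries.coeff_mul,
      PowerSeries.coeff_mul, zdd_apply, Finset.smul_sum, ← Finset.sum_add_distrib]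
  apply Finset.sum_congr rfl
  rintro ⟨a, b⟩ hab
  rw [Finset.HasAntidiagonal.mem_antidiagonal] at hab
  rw [coeff_coeffwise, coeff_coeffwise, zdd_apply, zdd_apply, smul_mul_assoc, mul_smul_comm,
      ← add_smul]
  rw [← hab]
  push_cast
  ring_nf

lemma zdd_Fgen_coeff (b : ℕ) :
    PowerSeries.coeff b (coeffwise zdd Fgen)
      = if b = 0 then 0 else ((-1 : ℚ) ^ (b - 1)) • pVar b := by
  rw [coeff_coeffwise]
  have hF : PowerSeries.coeff b Fgen
      = if b = 0 then 0 else ((-1 : ℚ) ^ (b - 1) * (b : ℚ)⁻¹) • pVar b :=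
    PowerSeries.coeff_mk _ _
  rw [hF]
  rcases eq_or_ne b 0 with rfl | hb
  · rw [if_pos rfl, if_pos rfl, map_zero]
  · rw [if_neg hb, if_neg hb, zdd_apply, smul_smul]
    congr 1
    have hbq : (b : ℚ) ≠ 0 := Nat.cast_ne_zero.mpr hb
    field_simp

lemma newton (n : ℕ) :
    (n : ℚ) • ePoly n
      = ∑ i ∈ Finset.range n, ((-1 : ℚ) ^ i) • ((X i : Lam) * ePoly (n - (i + 1))) := by
  have hD0 : PowerSeries.constantCoeff (coeffwise zdd Fgen) = 0 := by
    rw [← PowerSeries.coeff_zero_eq_constantCoeff, zdd_Fgen_coeff, if_pos rfl]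
  have h := deriv_psExp Fgen constantCoeff_Fgen zdd zdd_hmul hD0
  have h2 := congrArg (PowerSeries.coeff n) h
  rw [coeff_coeffwise, zdd_apply, PowerSeries.coeff_mul, ← ePoly_eq] at h2
  rw [h2, Finset.Nat.sum_antidiagonal_eq_sum_range_succ_mk]
  -- now a sum over range (n+1) with i-th term f i
  rw [Finset.sum_range_succ]
  have hlast : PowerSeries.coeff n (psExp Fgen)
      * PowerSeries.coeff (n - n) (coeffwise zdd Fgen) = 0 := by
    rw [Nat.sub_self, zdd_Fgen_coeff, if_pos rfl, mul_zero]
  rw [hlast, add_zero, ← Finset.sum_range_reflect]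
  apply Finset.sum_congr rfl
  intro i hi
  rw [Finset.mem_range] at hi
  have e1 : n - 1 - i = n - (i + 1) := by omega
  have e2 : n - (n - (i + 1)) = i + 1 := by omega
  rw [e1, e2, zdd_Fgen_coeff, if_neg (by omega), Nat.add_sub_cancel, ← ePoly_eq]
  have hpv : pVar (i + 1) = (X i : Lam) := by
    unfold pVar
    rw [Nat.add_sub_cancel]
  rw [hpv, mul_smul_comm, mul_comm]

end EGen

section Adjoint

lemma hallForm_zero_left (g : Lam) : hallForm 0 g = 0 := by
  unfold hallForm
  simp

lemma hallForm_zero_right (f : Lam) : hallForm f 0 = 0 := by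
  rw [hallForm_comm, hallForm_zero_left]

lemma hallForm_sub_right (f g₁ g₂ : Lam) :
    hallForm f (g₁ - g₂) = hallForm f g₁ - hallForm f g₂ := by
  rw [hallForm_comm, hallForm_sub_left, hallForm_comm g₁, hallForm_comm g₂]

lemma hall_adjoint_D (i : ℕ) (f g : Lam) :
    hallForm (Dop i f) g = hallForm f ((X i : Lam) * g) := by
  induction f using MvPolynomial.induction_on' with
  | add f1 f2 hf1 hf2 => rw [map_add, hallForm_add_left, hallForm_add_left, hf1, hf2]
  | monomial d a =>
    induction g using MvPolynomial.induction_on' with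
    | add g1 g2 hg1 hg2 => rw [mul_add, hallForm_add_right, hallForm_add_right, hg1, hg2]
    | monomial b c =>
      rw [Dop_apply, pderiv_monomial, hallForm_smul_left, hallForm_monomial_left]
      have hXm : (X i : Lam) * MvPolynomial.monomial b c = MvPolynomial.monomial (Finsupp.single i 1 + b) c := by
        rw [MvPolynomial.X, monomial_mul, one_mul]
      rw [hXm, hallForm_monomial_left, MvPolynomial.coeff_monomial,
        MvPolynomial.coeff_monomial]
      by_cases hdi : d i = 0
      · have hne : ¬ (Finsupp.single i 1 + b = d) := by
          intro h
          have := DFunLike.congr_fun h i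
          rw [Finsupp.add_apply, Finsupp.single_eq_same] at this
          omega
        rw [if_neg hne, hdi]
        push_cast
        ring
      · have hle : Finsupp.single i 1 ≤ d := by
          rw [Finsupp.single_le_iff]
          omega
        by_cases hb : b = d - Finsupp.single i 1
        · subst hb
          rw [if_pos rfl, if_pos (add_tsub_cancel_of_le hle)]
          have hz : zWeight d
              = ((i : ℚ) + 1) * ((((d - Finsupp.single i 1 : ℕ →₀ ℕ) i) : ℚ) + 1)
                * zWeight (d - Finsupp.single i 1) := by
            conv_lhs => rw [show d = (d - Finsupp.single i 1) + Finsupp.single i 1 from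
              (tsub_add_cancel_of_le hle).symm]
            rw [zWeight_add_single]
          rw [hz]
          have hdi' : ((((d - Finsupp.single i 1 : ℕ →₀ ℕ) i) : ℚ)) + 1 = ((d i : ℕ) : ℚ) := by
            rw [Finsupp.tsub_apply, Finsupp.single_eq_same]
            have h1 : d i - 1 + 1 = d i := by omega
            rw [← h1]
            push_cast
            ring
          rw [hdi']
          ring
        · have hne : ¬ (Finsupp.single i 1 + b = d) := by
            intro h
            apply hb
            rw [← h, add_tsub_cancel_left]
          rw [if_neg hb, if_neg hne]
          ring

lemma hall_adjoint_D' (i : ℕ) (f g : Lam) :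
    hallForm ((X i : Lam) * f) g = hallForm f (Dop i g) := by
  rw [hallForm_comm, ← hall_adjoint_D, hallForm_comm]

noncomputable def Pop (i : ℕ) : Module.End ℚ Lam := LinearMap.mulLeft ℚ (X i : Lam)

lemma Pop_apply (i : ℕ) (f : Lam) : Pop i f = (X i : Lam) * f := rfl

lemma eMul_apply (n : ℕ) (f : Lam) : eMul n f = ePoly n * f := rfl

lemma eMul_zero : eMul 0 = 1 := by
  apply LinearMap.ext
  intro f
  rw [eMul_apply, ePoly_zero, one_mul, Module.End.one_apply]

lemma estar_zero (estar : ℕ → Module.End ℚ Lam)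
    (hadj : ∀ (n : ℕ) (f g : Lam), hallForm (estar n f) g = hallForm f (ePoly n * g)) :
    estar 0 = 1 := by
  apply LinearMap.ext
  intro f
  apply hallForm_ext
  intro g
  rw [hadj, ePoly_zero, one_mul, Module.End.one_apply]

lemma estar_comm_X (estar : ℕ → Module.End ℚ Lam)
    (hadj : ∀ (n : ℕ) (f g : Lam), hallForm (estar n f) g = hallForm f (ePoly n * g))
    (m i : ℕ) :
    estar m * Pop i - Pop i * estar m
      = if i + 1 ≤ m then ((-1 : ℚ) ^ i) • estar (m - (i + 1)) else 0 := by
  apply LinearMap.ext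
  intro f
  apply hallForm_ext
  intro g
  rw [LinearMap.sub_apply, Module.End.mul_apply, Module.End.mul_apply, Pop_apply, Pop_apply,
      hallForm_sub_left, hadj m ((X i : Lam) * f) g, hall_adjoint_D' i f (ePoly m * g),
      hall_adjoint_D' i (estar m f) g, hadj m f (Dop i g), ← hallForm_sub_right]
  have hder : Dop i (ePoly m * g) - ePoly m * Dop i g = (Dop i (ePoly m)) * g := by
    rw [Dop_apply, Dop_apply, Dop_apply, pderiv_mul, smul_add, mul_smul_comm, smul_mul_assoc,
      add_sub_cancel_right]
  rw [hder, Dop_ePoly]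
  split_ifs with h
  · rw [smul_mul_assoc, hallForm_smul_right, ← hadj, LinearMap.smul_apply, hallForm_smul_left]
  · rw [zero_mul, LinearMap.zero_apply, hallForm_zero_left, hallForm_zero_right]

lemma newton_op (n : ℕ) :
    (n : ℚ) • eMul n
      = ∑ i ∈ Finset.range n, ((-1 : ℚ) ^ i) • (Pop i * eMul (n - (i + 1))) := by
  apply LinearMap.ext
  intro f
  rw [LinearMap.smul_apply, eMul_apply, LinearMap.sum_apply, ← smul_mul_assoc, newton,
      Finset.sum_mul]
  apply Finset.sum_congr rfl
  intro i _
  rw [LinearMap.smul_apply, Module.End.mul_apply, Pop_apply, eMul_apply, smul_mul_assoc,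
      mul_assoc]

end Adjoint

set_option maxHeartbeats 2000000 in
/-- Let `e_n` denote multiplication by the `n`-th elementary symmetric function on `Λ`, and
let `e*_n` be its adjoint with respect to the Hall inner product (the skewing operator).
Then for all `m, n ≥ 1`: `e*_m ∘ e_n - e_n ∘ e*_m = e*_{m-1} ∘ e_{n-1}` (with
`e_0 = e*_0 = id`; note that the adjointness hypothesis forces `e*_0 = id`). -/
theorem estar_comp_e_commutation_relation
    (estar : ℕ → Module.End ℚ Lam)
    (hadj : ∀ (n : ℕ) (f g : Lam), hallForm (estar n f) g = hallForm f (ePoly n * g))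
    (m n : ℕ) (hm : 1 ≤ m) (hn : 1 ≤ n) :
    estar m * eMul n - eMul n * estar m = estar (m - 1) * eMul (n - 1) := by
  have hF2 : ∀ M i : ℕ,
      estar M * Pop i = Pop i * estar M
        + (if i + 1 ≤ M then ((-1 : ℚ) ^ i) • estar (M - (i + 1)) else 0) := by
    intro M i
    rw [← estar_comm_X estar hadj M i, add_sub_cancel]
  clear hadj
  induction n using Nat.strong_induction_on generalizing m with
  | _ n IH =>
  obtain ⟨n', rfl⟩ : ∃ n'', n = n'' + 1 := ⟨n - 1, by omega⟩
  have hnQ : ((n' + 1 : ℕ) : ℚ) ≠ 0 := by positivity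
  rw [← inv_smul_smul₀ hnQ (estar m * eMul (n' + 1) - eMul (n' + 1) * estar m),
      ← inv_smul_smul₀ hnQ (estar (m - 1) * eMul (n' + 1 - 1))]
  congr 1
  rw [Nat.add_sub_cancel]
  have step1 : ((n' + 1 : ℕ) : ℚ) • (estar m * eMul (n' + 1) - eMul (n' + 1) * estar m)
      = ∑ i ∈ Finset.range (n' + 1),
          (estar m * (((-1 : ℚ) ^ i) • (Pop i * eMul (n' + 1 - (i + 1))))
           - (((-1 : ℚ) ^ i) • (Pop i * eMul (n' + 1 - (i + 1)))) * estar m) := by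
    rw [smul_sub, ← mul_smul_comm, ← smul_mul_assoc, newton_op (n' + 1), Finset.mul_sum,
      Finset.sum_mul, ← Finset.sum_sub_distrib]
  have hterm : ∀ i ∈ Finset.range (n' + 1),
      estar m * (((-1 : ℚ) ^ i) • (Pop i * eMul (n' + 1 - (i + 1))))
        - (((-1 : ℚ) ^ i) • (Pop i * eMul (n' + 1 - (i + 1)))) * estar m
      = ((-1 : ℚ) ^ i) • (Pop i *
          (if i + 1 < n' + 1 then estar (m - 1) * eMul (n' + 1 - (i + 1) - 1) else 0))
        + (if i + 1 ≤ m then estar (m - (i + 1)) else 0) * eMul (n' - i) := by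
    intro i hi
    rw [Finset.mem_range] at hi
    have hcomm : estar m * eMul (n' + 1 - (i + 1)) - eMul (n' + 1 - (i + 1)) * estar m
        = (if i + 1 < n' + 1 then estar (m - 1) * eMul (n' + 1 - (i + 1) - 1) else 0) := by
      by_cases hlt : i + 1 < n' + 1
      · rw [if_pos hlt]
        exact IH (n' + 1 - (i + 1)) (by omega) m hm (by omega)
      · rw [if_neg hlt]
        have h0 : n' + 1 - (i + 1) = 0 := by omega
        rw [h0, eMul_zero, mul_one, one_mul, sub_self]
    have hCu : (if i + 1 ≤ m then estar (m - (i + 1)) else 0) * eMul (n' - i)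
        = ((-1 : ℚ) ^ i) •
          ((if i + 1 ≤ m then ((-1 : ℚ) ^ i) • estar (m - (i + 1)) else 0)
            * eMul (n' + 1 - (i + 1))) := by
      have hidx : n' + 1 - (i + 1) = n' - i := by omega
      rw [hidx]
      by_cases h : i + 1 ≤ m
      · rw [if_pos h, if_pos h, smul_mul_assoc, smul_smul, ← pow_add,
          Even.neg_one_pow ⟨i, rfl⟩, one_smul]
      · rw [if_neg h, if_neg h, zero_mul, smul_zero]
    have hmain : estar m * (Pop i * eMul (n' + 1 - (i + 1)))
        - Pop i * eMul (n' + 1 - (i + 1)) * estar m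
        = Pop i * (if i + 1 < n' + 1 then estar (m - 1) * eMul (n' + 1 - (i + 1) - 1) else 0)
          + (if i + 1 ≤ m then ((-1 : ℚ) ^ i) • estar (m - (i + 1)) else 0)
            * eMul (n' + 1 - (i + 1)) := by
      rw [← hcomm, ← mul_assoc, hF2 m i, add_mul, mul_sub, mul_assoc, mul_assoc,
        add_sub_right_comm]
    calc estar m * (((-1 : ℚ) ^ i) • (Pop i * eMul (n' + 1 - (i + 1))))
          - (((-1 : ℚ) ^ i) • (Pop i * eMul (n' + 1 - (i + 1)))) * estar m
        = ((-1 : ℚ) ^ i) • (estar m * (Pop i * eMul (n' + 1 - (i + 1)))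
            - Pop i * eMul (n' + 1 - (i + 1)) * estar m) := by
          rw [mul_smul_comm, smul_mul_assoc, smul_sub]
      _ = ((-1 : ℚ) ^ i) • (Pop i *
              (if i + 1 < n' + 1 then estar (m - 1) * eMul (n' + 1 - (i + 1) - 1) else 0)
            + (if i + 1 ≤ m then ((-1 : ℚ) ^ i) • estar (m - (i + 1)) else 0)
              * eMul (n' + 1 - (i + 1))) := by
          rw [hmain]
      _ = ((-1 : ℚ) ^ i) • (Pop i *
              (if i + 1 < n' + 1 then estar (m - 1) * eMul (n' + 1 - (i + 1) - 1) else 0))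
            + (if i + 1 ≤ m then estar (m - (i + 1)) else 0) * eMul (n' - i) := by
          rw [smul_add, ← hCu]
  rw [step1, Finset.sum_congr rfl hterm, Finset.sum_add_distrib]
  have hSumB : ∑ i ∈ Finset.range (n' + 1),
        (if i + 1 ≤ m then estar (m - (i + 1)) else 0) * eMul (n' - i)
      = (∑ i ∈ Finset.range n',
          (if i + 1 + 1 ≤ m then estar (m - (i + 1 + 1)) else 0) * eMul (n' - (i + 1)))
        + estar (m - 1) * eMul n' := by
    rw [Finset.sum_range_succ']
    congr 1
    rw [if_pos hm, Nat.sub_zero]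
  have hSumA : ∑ i ∈ Finset.range (n' + 1),
        ((-1 : ℚ) ^ i) • (Pop i *
          (if i + 1 < n' + 1 then estar (m - 1) * eMul (n' + 1 - (i + 1) - 1) else 0))
      = ((n' : ℕ) : ℚ) • (estar (m - 1) * eMul n')
        - ∑ i ∈ Finset.range n',
            (if i + 1 + 1 ≤ m then estar (m - (i + 1 + 1)) else 0) * eMul (n' - (i + 1)) := by
    rw [Finset.sum_range_succ, if_neg (by omega), mul_zero, smul_zero, add_zero]
    have hterm2 : ∀ i ∈ Finset.range n',
        ((-1 : ℚ) ^ i) • (Pop i *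
          (if i + 1 < n' + 1 then estar (m - 1) * eMul (n' + 1 - (i + 1) - 1) else 0))
        = ((-1 : ℚ) ^ i) • (estar (m - 1) * (Pop i * eMul (n' - (i + 1))))
          - (if i + 1 + 1 ≤ m then estar (m - (i + 1 + 1)) else 0) * eMul (n' - (i + 1)) := by
      intro i hi
      rw [Finset.mem_range] at hi
      rw [if_pos (by omega)]
      have hidx : n' + 1 - (i + 1) - 1 = n' - (i + 1) := by omega
      rw [hidx]
      have hu1 : (if i + 1 + 1 ≤ m then estar (m - (i + 1 + 1)) else 0) * eMul (n' - (i + 1))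
          = ((-1 : ℚ) ^ i) •
            ((if i + 1 ≤ m - 1 then ((-1 : ℚ) ^ i) • estar (m - 1 - (i + 1)) else 0)
              * eMul (n' - (i + 1))) := by
        by_cases h : i + 1 ≤ m - 1
        · rw [if_pos h, if_pos (by omega : i + 1 + 1 ≤ m), smul_mul_assoc, smul_smul,
            ← pow_add, Even.neg_one_pow ⟨i, rfl⟩, one_smul]
          have : m - (i + 1 + 1) = m - 1 - (i + 1) := by omega
          rw [this]
        · rw [if_neg h, if_neg (by omega : ¬ (i + 1 + 1 ≤ m)), zero_mul, smul_zero]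
      have h3 : Pop i * estar (m - 1)
          = estar (m - 1) * Pop i
            - (if i + 1 ≤ m - 1 then ((-1 : ℚ) ^ i) • estar (m - 1 - (i + 1)) else 0) := by
        rw [hF2 (m - 1) i, add_sub_cancel_right]
      rw [hu1]
      calc ((-1 : ℚ) ^ i) • (Pop i * (estar (m - 1) * eMul (n' - (i + 1))))
          = ((-1 : ℚ) ^ i) • (estar (m - 1) * (Pop i * eMul (n' - (i + 1)))
              - (if i + 1 ≤ m - 1 then ((-1 : ℚ) ^ i) • estar (m - 1 - (i + 1)) else 0)
                * eMul (n' - (i + 1))) := by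
            rw [← mul_assoc, h3, sub_mul, mul_assoc]
        _ = ((-1 : ℚ) ^ i) • (estar (m - 1) * (Pop i * eMul (n' - (i + 1))))
              - ((-1 : ℚ) ^ i) • ((if i + 1 ≤ m - 1 then ((-1 : ℚ) ^ i) • estar (m - 1 - (i + 1)) else 0)
                * eMul (n' - (i + 1))) := by
            rw [smul_sub]
    rw [Finset.sum_congr rfl hterm2, Finset.sum_sub_distrib]
    congr 1
    calc ∑ i ∈ Finset.range n',
          ((-1 : ℚ) ^ i) • (estar (m - 1) * (Pop i * eMul (n' - (i + 1))))
        = ∑ i ∈ Finset.range n',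
            estar (m - 1) * (((-1 : ℚ) ^ i) • (Pop i * eMul (n' - (i + 1)))) := by
          exact Finset.sum_congr rfl fun i _ => (mul_smul_comm _ _ _).symm
      _ = estar (m - 1)
            * ∑ i ∈ Finset.range n', ((-1 : ℚ) ^ i) • (Pop i * eMul (n' - (i + 1))) := by
          rw [Finset.mul_sum]
      _ = estar (m - 1) * (((n' : ℕ) : ℚ) • eMul n') := by rw [← newton_op n']
      _ = ((n' : ℕ) : ℚ) • (estar (m - 1) * eMul n') := by rw [mul_smul_comm]
  rw [hSumA, hSumB]
  have hc : ((n' + 1 : ℕ) : ℚ) = ((n' : ℕ) : ℚ) + 1 := by push_cast; ring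
  rw [hc, add_smul, one_smul]
  abel
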